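/- For integers x > 4 and 1 < y < x, the vector (1, x, C(x,2) - x + y, C(x+1,3) - C(x,2) + C(y,2) - 1) is an M-vector. -/

import Mathlib

/-- The largest `n` with `C(n,i) ≤ l` (used in the greedy `i`-canonical
binomial representation). -/
noncomputable def macN (i l : ℕ) : ℕ := sSup {n : ℕ | Nat.choose n i ≤ l}

/-- The `i`-th Macaulay pseudo-power `l^{<i>}`, defined via the greedy
(`i`-canonical) binomial representation of `l`, with `0^{<i>} = 0`. -/
noncomputable def pseudoPow : ℕ → ℕ → ℕ
  | 0, _ => 0
  | i + 1, l =>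
    if l = 0 then 0
    else
      Nat.choose (macN (i + 1) l + 1) (i + 2) +
        pseudoPow i (l - Nat.choose (macN (i + 1) l) (i + 1))

lemma macN_eq (i l m : ℕ) (h1 : Nat.choose m i ≤ l)
    (h2 : l < Nat.choose (m + 1) i) : macN i l = m := by
  have hb : ∀ n ∈ {n : ℕ | Nat.choose n i ≤ l}, n ≤ m := by
    intro n hn
    by_contra hc
    push_neg at hc
    have := Nat.choose_le_choose i (show m + 1 ≤ n by omega)
    have hn' : Nat.choose n i ≤ l := hn
    omega
  apply le_antisymm
  · exact csSup_le ⟨m, h1⟩ hb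
  · exact le_csSup ⟨m, hb⟩ h1

lemma pseudoPow_one (l : ℕ) (hl : l ≠ 0) : pseudoPow 1 l = Nat.choose (l + 1) 2 := by
  have hm : macN 1 l = l := macN_eq 1 l l (by simp) (by simp)
  simp [pseudoPow, hl, hm]

/-- For integers `x > 4` and `1 < y < x`, the vector
`(1, x, C(x,2) - x + y, C(x+1,3) - C(x,2) + C(y,2) - 1)` is an M-vector,
i.e. `h_2 ≤ h_1^{<1>}` and `h_3 ≤ h_2^{<2>}`. -/
theorem stmt4 (x y : ℕ) (hx : 4 < x) (hy1 : 1 < y) (hyx : y < x) :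
    Nat.choose x 2 - x + y ≤ pseudoPow 1 x ∧
    Nat.choose (x + 1) 3 - Nat.choose x 2 + Nat.choose y 2 - 1 ≤
      pseudoPow 2 (Nat.choose x 2 - x + y) := by
  -- basic binomial identities
  have hxe : x - 1 + 1 = x := by omega
  have hA : Nat.choose x 2 = Nat.choose (x - 1) 2 + (x - 1) := by
    have := Nat.choose_succ_succ (x - 1) 1
    simp only [Nat.succ_eq_add_one, Nat.reduceAdd, hxe, Nat.choose_one_right] at this
    omega
  have hxC : x ≤ Nat.choose x 2 := by
    calc x = Nat.choose x 1 := (Nat.choose_one_right x).symm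
    _ ≤ Nat.choose x 2 := Nat.choose_le_succ_of_lt_half_left (by omega)
  have h2eq : Nat.choose x 2 - x + y = Nat.choose (x - 1) 2 + (y - 1) := by omega
  constructor
  · rw [pseudoPow_one x (by omega)]
    have : Nat.choose (x + 1) 2 = Nat.choose x 2 + x := by
      have := Nat.choose_succ_succ x 1
      simp only [Nat.succ_eq_add_one, Nat.reduceAdd, Nat.choose_one_right] at this
      omega
    omega
  · rw [h2eq]
    have hm : macN 2 (Nat.choose (x - 1) 2 + (y - 1)) = x - 1 := by
      apply macN_eq
      · omega
      · rw [hxe, hA]; omega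
    have hne : Nat.choose (x - 1) 2 + (y - 1) ≠ 0 := by omega
    rw [show pseudoPow 2 (Nat.choose (x - 1) 2 + (y - 1)) =
        Nat.choose (macN 2 (Nat.choose (x - 1) 2 + (y - 1)) + 1) 3 +
          pseudoPow 1 (Nat.choose (x - 1) 2 + (y - 1) -
            Nat.choose (macN 2 (Nat.choose (x - 1) 2 + (y - 1))) 2) from by
      simp only [pseudoPow, hne, ↓reduceIte]]
    rw [hm, hxe]
    have hsub : Nat.choose (x - 1) 2 + (y - 1) - Nat.choose (x - 1) 2 = y - 1 := by omega
    rw [hsub, pseudoPow_one (y - 1) (by omega), show y - 1 + 1 = y from by omega]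
    have hB : Nat.choose (x + 1) 3 = Nat.choose x 2 + Nat.choose x 3 := by
      have := Nat.choose_succ_succ x 2
      simp only [Nat.succ_eq_add_one, Nat.reduceAdd] at this
      omega
    omega
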